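/- Let X and Y be finite simple graphs with |V(X)| ≥ 2, and suppose there is a quantum homomorphism from X to Y. Let Z denote the complement of the homomorphic product X ⋉ Y. Then: (i) for every α < 0 and every assignment of unit vectors u_v ∈ ℝ^m (v ∈ V(Z)) with u_v · u_{v'} = α whenever v,v' are adjacent in Z, one has 1 − 1/α ≥ |V(X)|; and (ii) there exist m ≥ 1 and unit vectors u_v ∈ ℝ^m (v ∈ V(Z)) with u_v · u_{v'} = −1/(|V(X)|−1) whenever v,v' are adjacent in Z. That is, ϑ(X ⋉ Y) = |V(X)|. -/

import Mathlib

open Matrix Finset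

/-- A quantum homomorphism from `X` to `Y`: for some `d ≥ 1` there are complex `d × d`
projectors `E x y` (Hermitian idempotents) with `∑ y, E x y = 1` for every `x`,
`E x y * E x y' = 0` whenever `y ≠ y'`, and `E x y * E x' y' = 0` whenever `x, x'`
are adjacent in `X` and `y, y'` are equal or nonadjacent in `Y`. -/
def IsQuantumHom {V W : Type} [Fintype V] [Fintype W]
    (X : SimpleGraph V) (Y : SimpleGraph W) : Prop :=
  ∃ d : ℕ, 0 < d ∧ ∃ E : V → W → Matrix (Fin d) (Fin d) ℂ,
    (∀ x y, (E x y).IsHermitian ∧ E x y * E x y = E x y) ∧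
    (∀ x, ∑ y, E x y = 1) ∧
    (∀ x y y', y ≠ y' → E x y * E x y' = 0) ∧
    (∀ x x' y y', X.Adj x x' → ¬ Y.Adj y y' → E x y * E x' y' = 0)

/-- The homomorphic product `X ⋉ Y`: distinct vertices `(x,y)` and `(x',y')` are adjacent
iff `x = x'`, or (`x ~ x'` in `X` and `y, y'` are equal or nonadjacent in `Y`). -/
def homProd {V W : Type} (X : SimpleGraph V) (Y : SimpleGraph W) :
    SimpleGraph (V × W) where
  Adj a b := a ≠ b ∧ (a.1 = b.1 ∨ (X.Adj a.1 b.1 ∧ ¬ Y.Adj a.2 b.2))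
  symm := ⟨by
    rintro a b ⟨hne, h⟩
    refine ⟨hne.symm, ?_⟩
    rcases h with h | ⟨h1, h2⟩
    · exact Or.inl h.symm
    · exact Or.inr ⟨h1.symm, fun hb => h2 hb.symm⟩⟩
  loopless := ⟨fun a ha => ha.1 rfl⟩

/-- The independence number: the largest size of a set of pairwise nonadjacent vertices. -/
noncomputable def indepNum {U : Type} [Fintype U] (Z : SimpleGraph U) : ℕ :=
  sSup {n | ∃ s : Finset U, s.card = n ∧ ∀ a ∈ s, ∀ b ∈ s, a ≠ b → ¬ Z.Adj a b}


/-- If `|V(X)| ≥ 2` and `X →q Y`, then for `Z` the complement of `X ⋉ Y`: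
(i) every `α`-representation of `Z` has `1 - 1/α ≥ |V(X)|`, and
(ii) `Z` has a `(-1/(|V(X)|-1))`-representation.  That is, `ϑ(X ⋉ Y) = |V(X)|`. -/
lemma aux_trace_self_mul_conj {d : ℕ} (A : Matrix (Fin d) (Fin d) ℂ) :
    trace (A * Aᴴ) = ((∑ j, ∑ k, Complex.normSq (A j k) : ℝ) : ℂ) := by
  simp [Matrix.trace, Matrix.diag, Matrix.mul_apply, Matrix.conjTranspose_apply,
    Complex.mul_conj]

lemma aux_simplex_sum {n : ℕ} (a b : Fin n) (hn : 0 < n) :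
    ∑ i : Fin n, ((if a = i then (1:ℝ) else 0) - 1/n) * ((if b = i then (1:ℝ) else 0) - 1/n)
      = (if a = b then 1 else 0) - 1/n := by
  have h : ∀ i : Fin n, ((if a = i then (1:ℝ) else 0) - 1/n) * ((if b = i then (1:ℝ) else 0) - 1/n)
      = (if a = i then (1:ℝ) else 0) * (if b = i then (1:ℝ) else 0)
        - (1/n) * (if a = i then (1:ℝ) else 0) - (1/n) * (if b = i then (1:ℝ) else 0) + (1/n)^2 := by
    intro i; ring
  rw [Finset.sum_congr rfl (fun i _ => h i)]
  have hn' : (n:ℝ) ≠ 0 := Nat.cast_ne_zero.2 hn.ne'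
  simp [Finset.sum_add_distrib, Finset.sum_sub_distrib, mul_ite, ite_mul, Finset.sum_ite_eq,
    Finset.mul_sum, Finset.card_univ]
  field_simp
  ring

lemma aux_triple_swap {β : Type} [Fintype β] {m : ℕ} (h : β → β → Fin m → ℂ) :
    ∑ v : β, ∑ v' : β, ∑ i : Fin m, h v v' i = ∑ i : Fin m, ∑ v : β, ∑ v' : β, h v v' i := by
  calc ∑ v : β, ∑ v' : β, ∑ i : Fin m, h v v' i
      = ∑ v : β, ∑ i : Fin m, ∑ v' : β, h v v' i :=
        Finset.sum_congr rfl fun v _ => Finset.sum_comm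
    _ = ∑ i : Fin m, ∑ v : β, ∑ v' : β, h v v' i := Finset.sum_comm

theorem theta_homProd_eq_card {V W : Type} [Fintype V] [Fintype W]
    (X : SimpleGraph V) (Y : SimpleGraph W)
    (hV : 2 ≤ Fintype.card V) (hq : IsQuantumHom X Y) :
    ((∀ (α : ℝ), α < 0 → ∀ m : ℕ, ∀ u : V × W → (Fin m → ℝ),
        (∀ v, ∑ i, u v i * u v i = 1) →
        (∀ v v', (homProd X Y)ᶜ.Adj v v' → ∑ i, u v i * u v' i = α) →
        (Fintype.card V : ℝ) ≤ 1 - 1 / α) ∧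
      (∃ m : ℕ, 1 ≤ m ∧ ∃ u : V × W → (Fin m → ℝ),
        (∀ v, ∑ i, u v i * u v i = 1) ∧
        (∀ v v', (homProd X Y)ᶜ.Adj v v' →
          ∑ i, u v i * u v' i = -1 / ((Fintype.card V : ℝ) - 1)))) := by
  classical
  obtain ⟨d, hd, E, hEhi, hEsum, hEorth, hEadj⟩ := hq
  set n := Fintype.card V with hndef
  have hnR : (2:ℝ) ≤ (n:ℝ) := by exact_mod_cast hV
  have hn0 : 0 < n := by omega
  have hnRpos : (0:ℝ) < (n:ℝ) := by linarith
  have hdR : (0:ℝ) < (d:ℝ) := by exact_mod_cast hd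
  constructor
  · -- Part (i)
    intro α hα m u hu hadj
    set M : Fin m → Matrix (Fin d) (Fin d) ℂ :=
      fun i => ∑ v : V × W, (u v i : ℂ) • E v.1 v.2 with hM
    -- total sum of projectors
    have hEsum1 : ∑ v : V × W, E v.1 v.2 = (n : ℂ) • 1 := by
      rw [Fintype.sum_prod_type]
      simp only [hEsum]
      rw [Finset.sum_const, Finset.card_univ]
      exact (Nat.cast_smul_eq_nsmul ℂ n (1 : Matrix (Fin d) (Fin d) ℂ)).symm
    have hNd : ∑ v : V × W, trace (E v.1 v.2) = (n : ℂ) * d := by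
      rw [← Matrix.trace_sum, hEsum1]
      simp [Matrix.trace_one]
    have hdiagtrace : ∑ v : V × W, trace (E v.1 v.2 * E v.1 v.2) = (n : ℂ) * d := by
      rw [Finset.sum_congr rfl fun v _ => by rw [(hEhi v.1 v.2).2]]
      exact hNd
    have htot : ∑ v : V × W, ∑ v' : V × W, trace (E v.1 v.2 * E v'.1 v'.2)
        = (n : ℂ)^2 * d := by
      have h1 : (∑ v : V × W, E v.1 v.2) * (∑ v' : V × W, E v'.1 v'.2)
          = ∑ v : V × W, ∑ v' : V × W, E v.1 v.2 * E v'.1 v'.2 := Finset.sum_mul_sum _ _ _ _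
      have h2 : trace ((∑ v : V × W, E v.1 v.2) * (∑ v' : V × W, E v'.1 v'.2))
          = ∑ v : V × W, ∑ v' : V × W, trace (E v.1 v.2 * E v'.1 v'.2) := by
        rw [h1, Matrix.trace_sum]
        exact Finset.sum_congr rfl fun v _ => Matrix.trace_sum _ _
      rw [← h2, hEsum1, smul_mul_assoc, mul_smul_comm, smul_smul, Matrix.trace_smul]
      simp [Matrix.trace_one, sq]
    -- pointwise identities
    have hkey : ∀ v v' : V × W, v ≠ v' →
        trace (E v.1 v.2 * E v'.1 v'.2) * ((∑ i, u v i * u v' i : ℝ) : ℂ)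
          = (α : ℂ) * trace (E v.1 v.2 * E v'.1 v'.2) := by
      intro v v' hne
      by_cases hA : (homProd X Y).Adj v v'
      · have h0 : E v.1 v.2 * E v'.1 v'.2 = 0 := by
          rcases hA.2 with h1 | ⟨h1, h2⟩
          · have hy : v.2 ≠ v'.2 := fun h => hne (Prod.ext h1 h)
            rw [← h1]
            exact hEorth v.1 v.2 v'.2 hy
          · exact hEadj _ _ _ _ h1 h2
        rw [h0]; simp
      · have hip : ∑ i, u v i * u v' i = α :=
          hadj v v' (by rw [SimpleGraph.compl_adj]; exact ⟨hne, hA⟩)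
        rw [hip, mul_comm]
    have hdiagkey : ∀ v : V × W,
        trace (E v.1 v.2 * E v.1 v.2) * ((∑ i, u v i * u v i : ℝ) : ℂ)
          = trace (E v.1 v.2) := by
      intro v; rw [hu v, (hEhi v.1 v.2).2]; simp
    -- the key scalar S, computed two ways
    set S : ℂ := ∑ v : V × W, ∑ v' : V × W,
      trace (E v.1 v.2 * E v'.1 v'.2) * ((∑ i, u v i * u v' i : ℝ) : ℂ) with hS
    have hS1 : S = (n : ℂ) * d + (α : ℂ) * ((n : ℂ)^2 * d - (n : ℂ) * d) := by
      have step1 : S = ∑ v : V × W, (trace (E v.1 v.2)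
          + (α : ℂ) * ((∑ v' : V × W, trace (E v.1 v.2 * E v'.1 v'.2))
              - trace (E v.1 v.2 * E v.1 v.2))) := by
        rw [hS]
        refine Finset.sum_congr rfl fun v _ => ?_
        rw [← Finset.add_sum_erase _ _ (mem_univ v), hdiagkey v,
          Finset.sum_congr rfl (fun v' hv' => hkey v v' (Ne.symm (Finset.mem_erase.1 hv').1)),
          ← Finset.mul_sum, Finset.sum_erase_eq_sub (mem_univ v)]
      rw [step1, Finset.sum_add_distrib, hNd, ← Finset.mul_sum,
        Finset.sum_sub_distrib, htot, hdiagtrace]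
    have hMherm : ∀ i, (M i)ᴴ = M i := by
      intro i
      simp only [hM, Matrix.conjTranspose_sum, Matrix.conjTranspose_smul,
        Complex.star_def, Complex.conj_ofReal]
      exact Finset.sum_congr rfl fun v _ => by rw [(hEhi v.1 v.2).1]
    have hMsq : ∀ i, trace (M i * M i)
        = ∑ v : V × W, ∑ v' : V × W,
            ((u v i : ℂ) * (u v' i : ℂ)) * trace (E v.1 v.2 * E v'.1 v'.2) := by
      intro i
      rw [hM]
      rw [Finset.sum_mul_sum, Matrix.trace_sum]
      refine Finset.sum_congr rfl fun v _ => ?_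
      rw [Matrix.trace_sum]
      refine Finset.sum_congr rfl fun v' _ => ?_
      rw [smul_mul_assoc, mul_smul_comm, smul_smul, Matrix.trace_smul, smul_eq_mul]
    have hS2 : S = ∑ i : Fin m, trace (M i * M i) := by
      have hpt : ∀ v v' : V × W,
          trace (E v.1 v.2 * E v'.1 v'.2) * ((∑ i, u v i * u v' i : ℝ) : ℂ)
            = ∑ i : Fin m, ((u v i : ℂ) * (u v' i : ℂ)) * trace (E v.1 v.2 * E v'.1 v'.2) := by
        intro v v'
        push_cast
        rw [Finset.mul_sum]
        exact Finset.sum_congr rfl fun i _ => by ring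
      rw [hS, Finset.sum_congr rfl fun v _ => Finset.sum_congr rfl fun v' _ => hpt v v',
        aux_triple_swap]
      exact Finset.sum_congr rfl fun i _ => (hMsq i).symm
    have hS3 : S = ((∑ i : Fin m, ∑ j, ∑ k, Complex.normSq (M i j k) : ℝ) : ℂ) := by
      rw [hS2]
      push_cast
      refine Finset.sum_congr rfl fun i _ => ?_
      rw [show M i * M i = M i * (M i)ᴴ from by rw [hMherm i], aux_trace_self_mul_conj]
      push_cast
      rfl
    -- combine
    have hreal : (n : ℝ) * d + α * ((n : ℝ)^2 * d - (n : ℝ) * d)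
        = ∑ i : Fin m, ∑ j, ∑ k, Complex.normSq (M i j k) := by
      have := hS1.symm.trans hS3
      exact_mod_cast this
    have hpos : (0:ℝ) ≤ (n : ℝ) * d + α * ((n : ℝ)^2 * d - (n : ℝ) * d) := by
      rw [hreal]
      exact Finset.sum_nonneg fun i _ => Finset.sum_nonneg fun j _ =>
        Finset.sum_nonneg fun k _ => Complex.normSq_nonneg _
    have h1 : (0:ℝ) ≤ 1 + α * ((n:ℝ) - 1) := by
      by_contra h'
      push_neg at h'
      nlinarith [mul_neg_of_pos_of_neg (mul_pos hnRpos hdR) h']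
    have hinv : α * (1/α) = 1 := mul_one_div_cancel hα.ne
    have h2 : (1 + α * ((n:ℝ) - 1)) * (1/α) ≤ 0 :=
      mul_nonpos_of_nonneg_of_nonpos h1 (le_of_lt (one_div_neg.2 hα))
    have h3 : 1/α + ((n:ℝ) - 1) ≤ 0 := by nlinarith [h2, hinv]
    linarith
  · -- Part (ii)
    set e := Fintype.equivFin V with he
    set c := Real.sqrt ((n:ℝ)/((n:ℝ)-1)) with hc
    have hn1 : (0:ℝ) < (n:ℝ) - 1 := by linarith
    have hc2 : c * c = (n:ℝ)/((n:ℝ)-1) := Real.mul_self_sqrt (div_nonneg (by linarith) (by linarith))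
    have key : ∀ v v' : V × W,
        ∑ i : Fin n, (c * ((if e v.1 = i then (1:ℝ) else 0) - 1/n))
            * (c * ((if e v'.1 = i then (1:ℝ) else 0) - 1/n))
          = ((n:ℝ)/((n:ℝ)-1)) * ((if e v.1 = e v'.1 then 1 else 0) - 1/n) := by
      intro v v'
      calc ∑ i : Fin n, (c * ((if e v.1 = i then (1:ℝ) else 0) - 1/n))
            * (c * ((if e v'.1 = i then (1:ℝ) else 0) - 1/n))
          = ∑ i : Fin n, (c * c) * (((if e v.1 = i then (1:ℝ) else 0) - 1/n)
              * ((if e v'.1 = i then (1:ℝ) else 0) - 1/n)) :=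
            Finset.sum_congr rfl fun i _ => by ring
        _ = (c * c) * ∑ i : Fin n, ((if e v.1 = i then (1:ℝ) else 0) - 1/n)
              * ((if e v'.1 = i then (1:ℝ) else 0) - 1/n) := (Finset.mul_sum _ _ _).symm
        _ = _ := by rw [hc2, aux_simplex_sum _ _ hn0]
    refine ⟨n, hn0, fun v i => c * ((if e v.1 = i then (1:ℝ) else 0) - 1/n), fun v => ?_,
      fun v v' hadj => ?_⟩
    · beta_reduce
      rw [key v v]
      rw [if_pos rfl]
      field_simp
    · have hx : v.1 ≠ v'.1 := by
        rw [SimpleGraph.compl_adj] at hadj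
        intro h
        exact hadj.2 ⟨hadj.1, Or.inl h⟩
      beta_reduce
      rw [key v v', if_neg (fun h => hx (e.injective h))]
      field_simp
      ring
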